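/- Large-SNR asymptotics of the Rademacher mmse: for x > 0, 1 − ∫ tanh(t) · (2πx)^{−1/2} exp(−(t − x)²/(2x)) dt = √(π/2) · e^{−x/2} / √x · (1 + O(1/x)) as x → ∞; in particular log(1 − E tanh(x + √x Z)) = −x/2 (1 + o(1)) as x → ∞. -/

import Mathlib

open MeasureTheory Real Filter Topology Set

lemma integrable_exp_neg_mul_abs {b : ℝ} (hb : 0 < b) :
    Integrable (fun t : ℝ => Real.exp (-(b * |t|))) := by
  rw [← integrableOn_univ, ← Set.Iic_union_Ioi (a := (0:ℝ)), integrableOn_union]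
  constructor
  · have h := exp_neg_integrableOn_Ioi 0 hb
    have h2 := (MeasurePreserving.integrableOn_comp_preimage
      (Measure.measurePreserving_neg (volume : Measure ℝ))
      (Homeomorph.neg ℝ).measurableEmbedding).2 h
    have h3 : IntegrableOn (fun t : ℝ => Real.exp (b * t)) (Iio 0) := by
      simpa [Function.comp_def, mul_neg, neg_neg] using h2
    rw [integrableOn_Iic_iff_integrableOn_Iio]
    exact h3.congr_fun (fun t ht => by
      rw [abs_of_neg ht]; ring_nf) measurableSet_Iio
  · exact (exp_neg_integrableOn_Ioi 0 hb).congr_fun (fun t ht => by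
      rw [abs_of_pos ht]; ring_nf) measurableSet_Ioi

lemma sech_le (t : ℝ) : (Real.cosh t)⁻¹ ≤ 2 * Real.exp (-(1 * |t|)) := by
  have h1 : Real.exp |t| / 2 ≤ Real.cosh t := by
    rw [← Real.cosh_abs, Real.cosh_eq]
    have : (0:ℝ) < Real.exp (-|t|) := Real.exp_pos _
    linarith
  have h2 : (0:ℝ) < Real.exp |t| / 2 := by positivity
  calc (Real.cosh t)⁻¹ ≤ (Real.exp |t| / 2)⁻¹ := by
        apply inv_anti₀ h2 h1
    _ = 2 * Real.exp (-(1 * |t|)) := by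
        rw [Real.exp_neg]; field_simp
  
lemma integrable_sech : Integrable (fun t : ℝ => (Real.cosh t)⁻¹) := by
  refine ((integrable_exp_neg_mul_abs one_pos).const_mul 2).mono ?_ ?_
  · exact (Real.continuous_cosh.inv₀ (fun t => (Real.cosh_pos t).ne')).aestronglyMeasurable
  · refine .of_forall fun t => ?_
    rw [Real.norm_eq_abs, Real.norm_eq_abs, abs_of_pos (by positivity),
      abs_of_pos (by positivity : (0:ℝ) < 2 * Real.exp (-(1 * |t|)))]
    exact sech_le t

lemma sq_le_exp_half_abs (t : ℝ) : t^2 ≤ 16 * Real.exp ((1/2) * |t|) := by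
  have h := Real.add_one_le_exp ((1/2) * |t| / 2)
  have h2 : (0:ℝ) ≤ (1/2) * |t| / 2 := by positivity
  have h3 : ((1/2) * |t| / 2 + 1)^2 ≤ (Real.exp ((1/2)*|t|/2))^2 := by
    apply pow_le_pow_left₀ (by positivity) h
  rw [← Real.exp_nat_mul] at h3
  have h4 : ((2:ℕ):ℝ) * (1/2 * |t| / 2) = (1/2) * |t| := by push_cast; ring
  rw [h4] at h3
  nlinarith [abs_nonneg t, sq_abs t]

lemma integrable_sq_sech : Integrable (fun t : ℝ => t^2 * (Real.cosh t)⁻¹) := by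
  refine ((integrable_exp_neg_mul_abs (by norm_num : (0:ℝ) < 1/2)).const_mul 32).mono ?_ ?_
  · exact ((continuous_pow 2).mul
      (Real.continuous_cosh.inv₀ (fun t => (Real.cosh_pos t).ne'))).aestronglyMeasurable
  · refine .of_forall fun t => ?_
    rw [Real.norm_eq_abs, Real.norm_eq_abs, abs_of_nonneg (by positivity),
      abs_of_pos (by positivity : (0:ℝ) < 32 * Real.exp (-(1/2 * |t|)))]
    have h1 := sq_le_exp_half_abs t
    have h2 := sech_le t
    have h3 : (0:ℝ) ≤ (Real.cosh t)⁻¹ := by positivity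
    calc t^2 * (Real.cosh t)⁻¹ ≤ (16 * Real.exp ((1/2) * |t|)) * (2 * Real.exp (-(1 * |t|))) := by
          apply mul_le_mul h1 h2 h3 (by positivity)
      _ = 32 * Real.exp (-(1/2 * |t|)) := by
          rw [show (16:ℝ) * Real.exp ((1/2) * |t|) * (2 * Real.exp (-(1 * |t|)))
              = 32 * (Real.exp ((1/2) * |t|) * Real.exp (-(1 * |t|))) from by ring,
            ← Real.exp_add]
          ring_nf

lemma hasDerivAt_arctan_sinh (t : ℝ) :
    HasDerivAt (fun s => Real.arctan (Real.sinh s)) ((Real.cosh t)⁻¹) t := by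
  have h := (Real.hasDerivAt_arctan (Real.sinh t)).comp t (Real.hasDerivAt_sinh t)
  refine h.congr_deriv ?_
  have hc := (Real.cosh_pos t).ne'
  have hsq : 1 + Real.sinh t ^ 2 = Real.cosh t ^ 2 := (Real.cosh_sq' t).symm
  rw [hsq]
  field_simp

lemma tendsto_sinh_atTop : Tendsto Real.sinh atTop atTop := by
  apply tendsto_atTop_mono' _ (eventually_atTop.2 ⟨0, fun x hx => ?_⟩) tendsto_id
  rcases eq_or_lt_of_le hx with h | h
  · simp [← h]
  · exact (Real.self_lt_sinh_iff.2 h).le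

lemma tendsto_sinh_atBot : Tendsto Real.sinh atBot atBot := by
  apply tendsto_atBot_mono' _ (eventually_atBot.2 ⟨0, fun x hx => ?_⟩) tendsto_id
  rcases eq_or_lt_of_le hx with h | h
  · simp [h]
  · exact (Real.sinh_lt_self_iff.2 h).le

lemma integral_sech : ∫ t : ℝ, (Real.cosh t)⁻¹ = Real.pi := by
  have h := integral_of_hasDerivAt_of_tendsto (f := fun s => Real.arctan (Real.sinh s))
    (f' := fun t => (Real.cosh t)⁻¹) (m := -(Real.pi/2)) (n := Real.pi/2)
    hasDerivAt_arctan_sinh integrable_sech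
    (((tendsto_nhds_of_tendsto_nhdsWithin Real.tendsto_arctan_atBot).comp
      tendsto_sinh_atBot))
    (((tendsto_nhds_of_tendsto_nhdsWithin Real.tendsto_arctan_atTop).comp
      tendsto_sinh_atTop))
  rw [h]; ring

lemma abs_sinh_le_cosh (t : ℝ) : |Real.sinh t| ≤ Real.cosh t := by
  rw [Real.sinh_eq, Real.cosh_eq]
  have h1 := Real.exp_pos t
  have h2 := Real.exp_pos (-t)
  refine abs_le.2 ⟨by nlinarith, by nlinarith⟩

lemma abs_tanh_le_one (t : ℝ) : |Real.tanh t| ≤ 1 := by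
  rw [Real.tanh_eq_sinh_div_cosh, abs_div, abs_of_pos (Real.cosh_pos t)]
  exact div_le_one_of_le₀ (abs_sinh_le_cosh t) (Real.cosh_pos t).le

lemma continuous_tanh' : Continuous Real.tanh := by
  have h : Real.tanh = fun t => Real.sinh t / Real.cosh t :=
    funext fun t => Real.tanh_eq_sinh_div_cosh t
  rw [h]
  exact Real.continuous_sinh.div Real.continuous_cosh fun t => (Real.cosh_pos t).ne'

/-- The Rademacher mmse function written as a Gaussian integral:
`mmse(x) = 1 − ∫ tanh(t) (2πx)^{−1/2} exp(−(t − x)²/(2x)) dt`. -/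
noncomputable def radMMSE (x : ℝ) : ℝ :=
  1 - ∫ t : ℝ, Real.tanh t * (Real.sqrt (2 * Real.pi * x))⁻¹ *
        Real.exp (-(t - x)^2 / (2*x))

lemma gauss_integrable {x : ℝ} (hx : 0 < x) :
    Integrable (fun t : ℝ => Real.exp (-(t - x)^2 / (2*x))) := by
  have hb : (0:ℝ) < (2*x)⁻¹ := by positivity
  have h : Integrable (fun t : ℝ => Real.exp (-(2*x)⁻¹ * (t - x)^2)) :=
    Integrable.comp_sub_right (f := fun t : ℝ => Real.exp (-(2*x)⁻¹ * t^2))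
      (integrable_exp_neg_mul_sq hb) x
  have he : (fun t : ℝ => Real.exp (-(t - x)^2 / (2*x)))
      = fun t : ℝ => Real.exp (-(2*x)⁻¹ * (t - x)^2) := by
    funext t; congr 1; field_simp
  rw [he]; exact h

lemma gauss_integral {x : ℝ} (hx : 0 < x) :
    ∫ t : ℝ, Real.exp (-(t - x)^2 / (2*x)) = Real.sqrt (2 * Real.pi * x) := by
  have hb : (0:ℝ) < (2*x)⁻¹ := by positivity
  have h1 : ∀ t : ℝ, Real.exp (-(t - x)^2 / (2*x)) = Real.exp (-(2*x)⁻¹ * (t-x)^2) := by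
    intro t; congr 1; field_simp
  simp_rw [h1]
  rw [show (∫ t : ℝ, Real.exp (-(2*x)⁻¹ * (t-x)^2))
      = ∫ t : ℝ, Real.exp (-(2*x)⁻¹ * t^2) from integral_sub_right_eq_self (fun t => Real.exp (-(2*x)⁻¹ * t^2)) x,
    integral_gaussian]
  congr 1
  field_simp

lemma sech_gauss_integrable {x : ℝ} (hx : 0 < x) :
    Integrable (fun t : ℝ => (Real.cosh t)⁻¹ * Real.exp (-t^2 / (2*x))) := by
  refine (integrable_sech.bdd_mul (c := 1) ?_ (.of_forall fun t => ?_)).congr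
    (Eventually.of_forall fun t => mul_comm _ _)
  · exact (Real.continuous_exp.comp (by continuity)).aestronglyMeasurable
  · rw [Real.norm_eq_abs, abs_of_pos (Real.exp_pos _)]
    exact Real.exp_le_one_iff.2 (div_nonpos_of_nonpos_of_nonneg (neg_nonpos.2 (sq_nonneg t)) (by positivity))

lemma radMMSE_eq {x : ℝ} (hx : 0 < x) :
    radMMSE x = Real.exp (-x/2) * (Real.sqrt (2 * Real.pi * x))⁻¹ *
      ∫ t : ℝ, (Real.cosh t)⁻¹ * Real.exp (-t^2 / (2*x)) := by
  set c : ℝ := (Real.sqrt (2 * Real.pi * x))⁻¹ with hc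
  have hcpos : 0 < Real.sqrt (2 * Real.pi * x) := Real.sqrt_pos.2 (by positivity)
  have hG := gauss_integrable hx
  have htanh : Integrable (fun t : ℝ => Real.tanh t * c * Real.exp (-(t - x)^2 / (2*x))) := by
    refine (hG.bdd_mul (c := |c|) ?_ (.of_forall fun t => ?_))
    · exact (continuous_tanh'.mul continuous_const).aestronglyMeasurable
    · rw [Real.norm_eq_abs, abs_mul]
      have := abs_tanh_le_one t
      nlinarith [abs_nonneg c]
  have hone : (1:ℝ) = ∫ t : ℝ, c * Real.exp (-(t - x)^2 / (2*x)) := by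
    rw [integral_const_mul, gauss_integral hx, hc, inv_mul_cancel₀ hcpos.ne']
  have hsub : radMMSE x
      = ∫ t : ℝ, (c * Real.exp (-(t - x)^2 / (2*x))
          - Real.tanh t * c * Real.exp (-(t - x)^2 / (2*x))) := by
    rw [radMMSE, integral_sub (hG.const_mul c) htanh, ← hone]
  rw [hsub]
  have hpt : ∀ t : ℝ, c * Real.exp (-(t - x)^2 / (2*x))
      - Real.tanh t * c * Real.exp (-(t - x)^2 / (2*x))
      = (Real.exp (-x/2) * c) * ((Real.cosh t)⁻¹ * Real.exp (-t^2 / (2*x))) := by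
    intro t
    have hch := (Real.cosh_pos t).ne'
    have h1 : 1 - Real.tanh t = Real.exp (-t) / Real.cosh t := by
      rw [Real.tanh_eq_sinh_div_cosh, ← Real.cosh_sub_sinh]
      field_simp
    have h2 : Real.exp (-t) * Real.exp (-(t - x)^2 / (2*x))
        = Real.exp (-x/2) * Real.exp (-t^2 / (2*x)) := by
      rw [← Real.exp_add, ← Real.exp_add]
      congr 1
      field_simp
      ring
    have : c * Real.exp (-(t - x)^2 / (2*x)) - Real.tanh t * c * Real.exp (-(t - x)^2 / (2*x))
        = c * ((1 - Real.tanh t) * Real.exp (-(t - x)^2 / (2*x))) := by ring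
    rw [this, h1]
    rw [show Real.exp (-t) / Real.cosh t * Real.exp (-(t - x)^2 / (2*x))
        = (Real.cosh t)⁻¹ * (Real.exp (-t) * Real.exp (-(t - x)^2 / (2*x))) from by ring,
      h2]
    ring
  simp_rw [hpt]
  rw [integral_const_mul]

lemma key_bound {x : ℝ} (hx : 0 < x) :
    |(∫ t : ℝ, (Real.cosh t)⁻¹ * Real.exp (-t^2 / (2*x))) - Real.pi|
      ≤ (∫ t : ℝ, t^2 * (Real.cosh t)⁻¹) / (2*x) := by
  have hI := sech_gauss_integrable hx
  have hdiff : (∫ t : ℝ, (Real.cosh t)⁻¹ * Real.exp (-t^2 / (2*x))) - Real.pi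
      = ∫ t : ℝ, ((Real.cosh t)⁻¹ * Real.exp (-t^2 / (2*x)) - (Real.cosh t)⁻¹) := by
    rw [integral_sub hI integrable_sech, integral_sech]
  rw [hdiff]
  have hstep : |∫ t : ℝ, ((Real.cosh t)⁻¹ * Real.exp (-t^2 / (2*x)) - (Real.cosh t)⁻¹)|
      ≤ ∫ t : ℝ, |(Real.cosh t)⁻¹ * Real.exp (-t^2 / (2*x)) - (Real.cosh t)⁻¹| := by
    simpa [Real.norm_eq_abs] using norm_integral_le_integral_norm
      (fun t : ℝ => (Real.cosh t)⁻¹ * Real.exp (-t^2 / (2*x)) - (Real.cosh t)⁻¹)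
  calc |∫ t : ℝ, ((Real.cosh t)⁻¹ * Real.exp (-t^2 / (2*x)) - (Real.cosh t)⁻¹)|
      ≤ ∫ t : ℝ, |(Real.cosh t)⁻¹ * Real.exp (-t^2 / (2*x)) - (Real.cosh t)⁻¹| := hstep
    _ ≤ ∫ t : ℝ, t^2 * (Real.cosh t)⁻¹ / (2*x) := by
        apply integral_mono ((hI.sub integrable_sech).abs) (integrable_sq_sech.div_const _)
        intro t
        show |(Real.cosh t)⁻¹ * Real.exp (-t^2 / (2*x)) - (Real.cosh t)⁻¹|
          ≤ t^2 * (Real.cosh t)⁻¹ / (2*x)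
        have hch : (0:ℝ) < (Real.cosh t)⁻¹ := by positivity
        have hu : (0:ℝ) ≤ t^2 / (2*x) := by positivity
        have he1 : Real.exp (-t^2 / (2*x)) ≤ 1 :=
          Real.exp_le_one_iff.2 (div_nonpos_of_nonpos_of_nonneg (neg_nonpos.2 (sq_nonneg t))
            (by positivity))
        have he2 : 1 - Real.exp (-t^2 / (2*x)) ≤ t^2 / (2*x) := by
          have := Real.add_one_le_exp (-(t^2 / (2*x)))
          have hh : -t^2 / (2*x) = -(t^2/(2*x)) := by ring
          rw [hh]; linarith
        have habs : |(Real.cosh t)⁻¹ * Real.exp (-t^2 / (2*x)) - (Real.cosh t)⁻¹|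
            = (Real.cosh t)⁻¹ * (1 - Real.exp (-t^2 / (2*x))) := by
          rw [abs_of_nonpos (by nlinarith)]
          ring
        rw [habs]
        calc (Real.cosh t)⁻¹ * (1 - Real.exp (-t^2 / (2*x)))
            ≤ (Real.cosh t)⁻¹ * (t^2 / (2*x)) := by
              apply mul_le_mul_of_nonneg_left he2 hch.le
          _ = t^2 * (Real.cosh t)⁻¹ / (2*x) := by ring
    _ = (∫ t : ℝ, t^2 * (Real.cosh t)⁻¹) / (2*x) := integral_div _ _

lemma mmse_est {x : ℝ} (hx : 0 < x) :
    |radMMSE x - Real.sqrt (Real.pi/2) * Real.exp (-x/2) / Real.sqrt x|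
      ≤ (((∫ t : ℝ, t^2 * (Real.cosh t)⁻¹) / (2*Real.pi) + 1) / x) *
        (Real.sqrt (Real.pi/2) * Real.exp (-x/2) / Real.sqrt x) := by
  set K := ∫ t : ℝ, t^2 * (Real.cosh t)⁻¹ with hKdef
  have hK0 : 0 ≤ K := integral_nonneg fun t => by positivity
  have hc0 : 0 < Real.sqrt (2*Real.pi*x) := Real.sqrt_pos.2 (by positivity)
  have hsx : 0 < Real.sqrt x := Real.sqrt_pos.2 hx
  set c : ℝ := (Real.sqrt (2*Real.pi*x))⁻¹ with hcdef
  have hcpos : 0 < c := by positivity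
  have h5 : Real.sqrt (Real.pi/2) * Real.sqrt (2*Real.pi*x) = Real.pi * Real.sqrt x := by
    rw [← Real.sqrt_mul (by positivity), show (Real.pi/2) * (2*Real.pi*x) = Real.pi^2 * x by ring,
      Real.sqrt_mul (sq_nonneg Real.pi), Real.sqrt_sq Real.pi_pos.le]
  have hm : Real.sqrt (Real.pi/2) * Real.exp (-x/2) / Real.sqrt x
      = Real.exp (-x/2) * c * Real.pi := by
    have h6 : Real.sqrt (Real.pi/2) = Real.pi * Real.sqrt x / Real.sqrt (2*Real.pi*x) := by
      rw [eq_div_iff hc0.ne']; exact h5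
    rw [h6, hcdef]
    field_simp
  rw [radMMSE_eq hx, hm]
  set J := ∫ t : ℝ, (Real.cosh t)⁻¹ * Real.exp (-t^2 / (2*x)) with hJdef
  have h7 : Real.exp (-x/2) * c * J - Real.exp (-x/2) * c * Real.pi
      = (Real.exp (-x/2) * c) * (J - Real.pi) := by ring
  rw [h7, abs_mul, abs_of_pos (by positivity : (0:ℝ) < Real.exp (-x/2) * c)]
  have h8 : |J - Real.pi| ≤ K / (2*x) := key_bound hx
  calc Real.exp (-x/2) * c * |J - Real.pi| ≤ Real.exp (-x/2) * c * (K / (2*x)) := by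
        apply mul_le_mul_of_nonneg_left h8 (by positivity)
    _ ≤ ((K / (2*Real.pi) + 1) / x) * (Real.exp (-x/2) * c * Real.pi) := by
        rw [show ((K / (2*Real.pi) + 1) / x) * (Real.exp (-x/2) * c * Real.pi)
            = Real.exp (-x/2) * c * ((K / (2*Real.pi) + 1) * Real.pi / x) from by ring]
        apply mul_le_mul_of_nonneg_left _ (by positivity)
        rw [div_le_div_iff₀ (by positivity) hx]
        have hpi := Real.pi_pos
        have h9 : (K / (2*Real.pi) + 1) * Real.pi = K/2 + Real.pi := by
          field_simp
        nlinarith [mul_pos hpi hx]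

lemma tendsto_helper (a : ℝ) :
    Tendsto (fun x : ℝ => (a - x/2 - Real.log x / 2) / x) atTop (𝓝 (-(1:ℝ)/2)) := by
  have h1 : Tendsto (fun x : ℝ => a / x) atTop (𝓝 0) :=
    tendsto_const_nhds.div_atTop tendsto_id
  have h2 : Tendsto (fun x : ℝ => Real.log x / x) atTop (𝓝 0) := by
    have h := Real.tendsto_pow_log_div_mul_add_atTop 1 0 1 one_ne_zero
    simpa using h
  have h3 : Tendsto (fun x : ℝ => a / x - 1/2 - (Real.log x / x)/2) atTop
      (𝓝 (0 - 1/2 - 0/2)) := (h1.sub tendsto_const_nhds).sub (h2.div_const 2)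
  rw [show (0:ℝ) - 1/2 - 0/2 = -(1:ℝ)/2 by norm_num] at h3
  refine h3.congr' ?_
  filter_upwards [eventually_gt_atTop (0:ℝ)] with x hx
  have hx' : x ≠ 0 := hx.ne'
  rw [eq_div_iff hx']
  field_simp

lemma log_m_eq {x : ℝ} (hx : 0 < x) (b : ℝ) (hb : 0 < b) :
    Real.log (b * (Real.sqrt (Real.pi/2) * Real.exp (-x/2) / Real.sqrt x))
      = (Real.log b + Real.log (Real.sqrt (Real.pi/2)) - x/2 - Real.log x / 2) := by
  have hs : (0:ℝ) < Real.sqrt (Real.pi/2) := Real.sqrt_pos.2 (by positivity)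
  have hsx : (0:ℝ) < Real.sqrt x := Real.sqrt_pos.2 hx
  rw [Real.log_mul hb.ne' (by positivity), Real.log_div (by positivity) hsx.ne',
    Real.log_mul hs.ne' (Real.exp_pos _).ne', Real.log_exp, Real.log_sqrt hx.le]
  ring

/-- Large-SNR asymptotics of the Rademacher mmse:
`mmse(x) = √(π/2) e^{−x/2}/√x (1 + O(1/x))` as `x → ∞`; in particular
`log mmse(x) = −(x/2)(1 + o(1))`, i.e. `log (mmse x) / x → −1/2`. -/
theorem radMMSE_asymptotics :
    (∃ C B : ℝ, 0 < C ∧ ∀ x : ℝ, B ≤ x →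
        |radMMSE x - Real.sqrt (Real.pi/2) * Real.exp (-x/2) / Real.sqrt x|
          ≤ (C / x) * (Real.sqrt (Real.pi/2) * Real.exp (-x/2) / Real.sqrt x))
    ∧ Tendsto (fun x : ℝ => Real.log (radMMSE x) / x) atTop (nhds (-(1:ℝ)/2)) := by
  set K := ∫ t : ℝ, t^2 * (Real.cosh t)⁻¹ with hKdef
  have hK0 : 0 ≤ K := integral_nonneg fun t => by positivity
  set C := K / (2*Real.pi) + 1 with hCdef
  have hC : 0 < C := by positivity
  constructor
  · exact ⟨C, 1, hC, fun x hx => mmse_est (lt_of_lt_of_le one_pos hx)⟩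
  · -- squeeze
    set m : ℝ → ℝ := fun x => Real.sqrt (Real.pi/2) * Real.exp (-x/2) / Real.sqrt x with hmdef
    have hmpos : ∀ x : ℝ, 0 < x → 0 < m x := fun x hx => by
      have : (0:ℝ) < Real.sqrt x := Real.sqrt_pos.2 hx
      positivity
    have hbound : ∀ x : ℝ, max 1 (2*C) ≤ x →
        m x / 2 ≤ radMMSE x ∧ radMMSE x ≤ 2 * m x := by
      intro x hx
      have hx1 : (1:ℝ) ≤ x := le_trans (le_max_left _ _) hx
      have hx0 : (0:ℝ) < x := lt_of_lt_of_le one_pos hx1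
      have hxC : 2*C ≤ x := le_trans (le_max_right _ _) hx
      have hest := mmse_est hx0
      have hm0 := hmpos x hx0
      rw [← hKdef, ← hCdef] at hest
      clear_value K C
      have hfrac : (C / x) ≤ 1/2 := by
        rw [div_le_iff₀ hx0]
        linarith
      have h1 : |radMMSE x - m x| ≤ (1/2) * m x := by
        refine le_trans hest ?_
        apply mul_le_mul_of_nonneg_right hfrac hm0.le
      rw [abs_le] at h1
      constructor <;> [linarith [h1.1]; linarith [h1.2]]
    apply tendsto_of_tendsto_of_tendsto_of_le_of_le'
      (g := fun x : ℝ => Real.log ((1/2) * m x) / x)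
      (h := fun x : ℝ => Real.log (2 * m x) / x)
    · -- lower tendsto
      have h := tendsto_helper (Real.log (1/2) + Real.log (Real.sqrt (Real.pi/2)))
      refine h.congr' ?_
      filter_upwards [eventually_gt_atTop (0:ℝ)] with x hx
      rw [log_m_eq hx (1/2) (by norm_num)]
    · have h := tendsto_helper (Real.log 2 + Real.log (Real.sqrt (Real.pi/2)))
      refine h.congr' ?_
      filter_upwards [eventually_gt_atTop (0:ℝ)] with x hx
      rw [log_m_eq hx 2 (by norm_num)]
    · filter_upwards [eventually_ge_atTop (max 1 (2*C))] with x hx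
      have hx0 : (0:ℝ) < x := lt_of_lt_of_le one_pos (le_trans (le_max_left _ _) hx)
      have hm0 := hmpos x hx0
      have h := (hbound x hx).1
      have hlog : Real.log ((1/2) * m x) ≤ Real.log (radMMSE x) := by
        apply Real.log_le_log (by positivity)
        linarith
      exact (div_le_div_iff_of_pos_right hx0).2 hlog
    · filter_upwards [eventually_ge_atTop (max 1 (2*C))] with x hx
      have hx0 : (0:ℝ) < x := lt_of_lt_of_le one_pos (le_trans (le_max_left _ _) hx)
      have hm0 := hmpos x hx0
      have h := (hbound x hx).2
      have hrpos : 0 < radMMSE x := by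
        have := (hbound x hx).1
        linarith
      have hlog : Real.log (radMMSE x) ≤ Real.log (2 * m x) :=
        Real.log_le_log hrpos h
      exact (div_le_div_iff_of_pos_right hx0).2 hlog
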